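/- For α = 1 and t > 0, the limit as N → ∞ of (1/ln N) · Σ_{j=1}^{N} 1/(1 + (j t)^β)^{1/β} equals 1/t, for any β > 0. -/

import Mathlib

open Filter Finset

/-- `1/log N → 0`. -/
lemma aux_one_div_log_tendsto :
    Tendsto (fun N : ℕ => 1 / Real.log N) atTop (nhds 0) := by
  simp only [one_div]
  exact (Real.tendsto_log_atTop.comp tendsto_natCast_atTop_atTop).inv_tendsto_atTop

/-- `(1/log N) * harmonic N → 1`. -/
lemma aux_harmonic_div_log :
    Tendsto (fun N : ℕ => (1 / Real.log N) * (harmonic N : ℝ)) atTop (nhds 1) := by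
  have h3 : Tendsto (fun N : ℕ =>
      (1 / Real.log N) * ((harmonic N : ℝ) - Real.log N) + 1) atTop (nhds (0 * _ + 1)) :=
    (aux_one_div_log_tendsto.mul Real.tendsto_harmonic_sub_log).add tendsto_const_nhds
  rw [zero_mul, zero_add] at h3
  refine h3.congr' ?_
  filter_upwards [eventually_ge_atTop 2] with N hN
  have hlog : Real.log N ≠ 0 := by
    have : (1:ℝ) < N := by exact_mod_cast lt_of_lt_of_le one_lt_two hN
    exact ne_of_gt (Real.log_pos this)
  field_simp
  ring

/-- Upper bound: the term is at most `1/(j t)`. -/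
lemma aux_term_le (β x : ℝ) (hβ : 0 < β) (hx : 0 < x) :
    1 / (1 + x ^ β) ^ (1 / β) ≤ 1 / x := by
  have h1 : x ≤ (1 + x ^ β) ^ (1 / β) := by
    have h2 : x ^ β ≤ 1 + x ^ β := by linarith
    calc x = (x ^ β) ^ (1 / β) := by
              rw [one_div, Real.rpow_rpow_inv hx.le hβ.ne']
      _ ≤ (1 + x ^ β) ^ (1 / β) :=
          Real.rpow_le_rpow (Real.rpow_nonneg hx.le β) h2 (by positivity)
  exact one_div_le_one_div_of_le hx h1

/-- Lower bound: `1/x - term ≤ (1/β) x^(-(1+β))`. -/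
lemma aux_term_ge (β x : ℝ) (hβ : 0 < β) (hx : 0 < x) :
    1 / x - 1 / (1 + x ^ β) ^ (1 / β) ≤ (1 / β) * x ^ (-(1 + β)) := by
  have hxβ : (0:ℝ) < x ^ β := Real.rpow_pos_of_pos hx β
  have hxnegβ : (0:ℝ) < x ^ (-β) := Real.rpow_pos_of_pos hx (-β)
  -- (1 + x^β) ≤ x^β * exp (x^(-β))
  have key : (1 + x ^ β) ^ (1 / β) ≤ x * Real.exp (x ^ (-β) / β) := by
    have h1 : 1 + x ^ β ≤ x ^ β * Real.exp (x ^ (-β)) := by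
      have h2 : x ^ (-β) + 1 ≤ Real.exp (x ^ (-β)) := Real.add_one_le_exp _
      have h3 : x ^ β * (x ^ (-β) + 1) = 1 + x ^ β := by
        rw [mul_add, mul_one, ← Real.rpow_add hx, add_neg_cancel, Real.rpow_zero]
      calc 1 + x ^ β = x ^ β * (x ^ (-β) + 1) := h3.symm
        _ ≤ x ^ β * Real.exp (x ^ (-β)) := by
            exact mul_le_mul_of_nonneg_left h2 hxβ.le
    calc (1 + x ^ β) ^ (1 / β) ≤ (x ^ β * Real.exp (x ^ (-β))) ^ (1 / β) :=
          Real.rpow_le_rpow (by positivity) h1 (by positivity)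
      _ = x * Real.exp (x ^ (-β) / β) := by
          rw [Real.mul_rpow (by positivity) (Real.exp_pos _).le, one_div,
            Real.rpow_rpow_inv hx.le hβ.ne', ← Real.exp_mul]
          ring_nf
  have hpos : (0:ℝ) < (1 + x ^ β) ^ (1 / β) := by positivity
  have h4 : 1 / (x * Real.exp (x ^ (-β) / β)) ≤ 1 / (1 + x ^ β) ^ (1 / β) :=
    one_div_le_one_div_of_le hpos key
  have h5 : (1 / x) * (1 - x ^ (-β) / β) ≤ 1 / (x * Real.exp (x ^ (-β) / β)) := by
    rw [one_div (x * _), mul_inv, ← Real.exp_neg]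
    have h6 : 1 - x ^ (-β) / β ≤ Real.exp (-(x ^ (-β) / β)) := by
      have := Real.add_one_le_exp (-(x ^ (-β) / β))
      linarith
    rw [one_div]
    exact mul_le_mul_of_nonneg_left h6 (by positivity)
  have h7 : (1 / x) * (1 - x ^ (-β) / β) = 1 / x - (1 / β) * x ^ (-(1 + β)) := by
    have : x ^ (-(1 + β)) = x ^ (-β) * x⁻¹ := by
      rw [← Real.rpow_neg_one x, ← Real.rpow_add hx]
      ring_nf
    rw [this, one_div]
    ring
  linarith

/-- Cauchy family, α = 1: (1/ln N) Σ_{j=1}^N (1+(jt)^β)^{-1/β} → 1/t. -/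
theorem cauchy_family_limit_eq_one (β t : ℝ) (hβ : 0 < β) (ht : 0 < t) :
    Tendsto (fun N : ℕ =>
        (1 / Real.log N) * ∑ j ∈ Finset.Icc 1 N, 1 / (1 + ((j : ℝ) * t) ^ β) ^ (1 / β))
      atTop (nhds (1 / t)) := by
  set g : ℕ → ℝ := fun j => 1 / ((j : ℝ) * t) - 1 / (1 + ((j : ℝ) * t) ^ β) ^ (1 / β) with hg
  -- bound constant
  set C : ℝ := (1 / β) * t ^ (-(1 + β)) * ∑' n : ℕ, (n : ℝ) ^ (-(1 + β)) with hC
  have hsummable : Summable (fun n : ℕ => (n : ℝ) ^ (-(1 + β))) := by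
    have h := Real.summable_one_div_nat_rpow.mpr (show (1:ℝ) < 1 + β by linarith)
    refine h.congr fun n => ?_
    rw [Real.rpow_neg (Nat.cast_nonneg n), one_div]
  -- D N := (1/log N) * ∑ g → 0
  have hDle : ∀ N : ℕ, ∑ j ∈ Finset.Icc 1 N, g j ≤
      (1 / β) * t ^ (-(1 + β)) * ∑' n : ℕ, (n : ℝ) ^ (-(1 + β)) := by
    intro N
    have step : ∀ j ∈ Finset.Icc 1 N, g j ≤ (1 / β) * t ^ (-(1 + β)) * (j : ℝ) ^ (-(1 + β)) := by
      intro j hj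
      have hj1 : 1 ≤ j := (Finset.mem_Icc.mp hj).1
      have hjpos : (0:ℝ) < (j : ℝ) := by exact_mod_cast hj1
      have hx : (0:ℝ) < (j : ℝ) * t := mul_pos hjpos ht
      have := aux_term_ge β ((j : ℝ) * t) hβ hx
      have hmul : ((j : ℝ) * t) ^ (-(1 + β)) = (j : ℝ) ^ (-(1 + β)) * t ^ (-(1 + β)) :=
        Real.mul_rpow hjpos.le ht.le
      rw [hg]
      calc 1 / ((j : ℝ) * t) - 1 / (1 + ((j : ℝ) * t) ^ β) ^ (1 / β)
          ≤ (1 / β) * ((j : ℝ) * t) ^ (-(1 + β)) := this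
        _ = (1 / β) * t ^ (-(1 + β)) * (j : ℝ) ^ (-(1 + β)) := by rw [hmul]; ring
    calc ∑ j ∈ Finset.Icc 1 N, g j
        ≤ ∑ j ∈ Finset.Icc 1 N, (1 / β) * t ^ (-(1 + β)) * (j : ℝ) ^ (-(1 + β)) :=
          Finset.sum_le_sum step
      _ = (1 / β) * t ^ (-(1 + β)) * ∑ j ∈ Finset.Icc 1 N, (j : ℝ) ^ (-(1 + β)) := by
          rw [Finset.mul_sum]
      _ ≤ (1 / β) * t ^ (-(1 + β)) * ∑' n : ℕ, (n : ℝ) ^ (-(1 + β)) := by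
          refine mul_le_mul_of_nonneg_left ?_ (by positivity)
          exact Summable.sum_le_tsum _ (fun n _ => Real.rpow_nonneg (Nat.cast_nonneg n) _) hsummable
  have hDnonneg : ∀ N : ℕ, 0 ≤ ∑ j ∈ Finset.Icc 1 N, g j := by
    intro N
    refine Finset.sum_nonneg fun j hj => ?_
    have hj1 : 1 ≤ j := (Finset.mem_Icc.mp hj).1
    have hjpos : (0:ℝ) < (j : ℝ) := by exact_mod_cast hj1
    have hx : (0:ℝ) < (j : ℝ) * t := mul_pos hjpos ht
    have := aux_term_le β ((j : ℝ) * t) hβ hx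
    rw [hg]
    dsimp only
    linarith
  have hD0 : Tendsto (fun N : ℕ => (1 / Real.log N) * ∑ j ∈ Finset.Icc 1 N, g j)
      atTop (nhds 0) := by
    have hub : Tendsto (fun N : ℕ => (1 / Real.log N) * C) atTop (nhds 0) := by
      have := aux_one_div_log_tendsto.mul_const C
      rwa [zero_mul] at this
    refine squeeze_zero' ?_ ?_ hub
    · filter_upwards [eventually_ge_atTop 2] with N hN
      have hlog : 0 < Real.log N := Real.log_pos (by exact_mod_cast lt_of_lt_of_le one_lt_two hN)
      exact mul_nonneg (by positivity) (hDnonneg N)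
    · filter_upwards [eventually_ge_atTop 2] with N hN
      have hlog : 0 < Real.log N := Real.log_pos (by exact_mod_cast lt_of_lt_of_le one_lt_two hN)
      exact mul_le_mul_of_nonneg_left (hDle N) (by positivity)
  -- harmonic part
  have hH : Tendsto (fun N : ℕ =>
      (1 / t) * ((1 / Real.log N) * (harmonic N : ℝ))) atTop (nhds ((1 / t) * 1)) :=
    aux_harmonic_div_log.const_mul (1 / t)
  rw [mul_one] at hH
  have hfinal := hH.sub hD0
  rw [sub_zero] at hfinal
  refine hfinal.congr fun N => ?_
  have hsum : ∑ j ∈ Finset.Icc 1 N, 1 / (1 + ((j : ℝ) * t) ^ β) ^ (1 / β)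
      = (1 / t) * (harmonic N : ℝ) - ∑ j ∈ Finset.Icc 1 N, g j := by
    rw [hg, Finset.sum_sub_distrib]
    have h1 : ∑ j ∈ Finset.Icc 1 N, 1 / ((j : ℝ) * t) = (1 / t) * (harmonic N : ℝ) := by
      rw [harmonic_eq_sum_Icc]
      push_cast
      rw [Finset.mul_sum]
      refine Finset.sum_congr rfl fun j hj => ?_
      rw [one_div, mul_inv]
      ring
    rw [h1]
    ring
  rw [hsum]
  ring
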